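/- Let d_n = det(L_n(1|1)) where L_n is the Laplacian of the fan graph on n vertices and L(1|1) denotes deleting row and column 1 (vertex 1 being a degree-2 path end). Then d_n = F_{2n-2}, the (2n−2)-nd Fibonacci number, equivalently d_n satisfies d_n = 3d_{n-1} − d_{n-2} for n ≥ 4. -/

import Mathlib

/-- Adjacency of the fan graph on `n` vertices (indices `0, …, n-1`): a path on
`0, …, n-2` joined to the hub `n-1`. -/
def fanAdj (n a b : ℕ) : Bool :=
  decide (((a + 1 = b ∨ b + 1 = a) ∧ a < n - 1 ∧ b < n - 1) ∨
    (a = n - 1 ∧ b < n - 1) ∨ (b = n - 1 ∧ a < n - 1))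

/-- Graph Laplacian of the graph on `n` vertices with adjacency `adj`. -/
def lapl (n : ℕ) (adj : ℕ → ℕ → Bool) : Matrix (Fin n) (Fin n) ℚ :=
  fun i j =>
    if i = j then ((Finset.univ.filter (fun l : Fin n => adj i.val l.val = true)).card : ℚ)
    else if adj i.val j.val then -1 else 0

/-- Delete the first row and column. -/
def delFirst {n : ℕ} (M : Matrix (Fin n) (Fin n) ℚ) :
    Matrix (Fin (n - 1)) (Fin (n - 1)) ℚ :=
  M.submatrix (fun i => ⟨i.val + 1, by have := i.isLt; omega⟩)
    (fun j => ⟨j.val + 1, by have := j.isLt; omega⟩)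


def triM (k : ℕ) : Matrix (Fin k) (Fin k) ℚ := fun i j =>
  if i.val = j.val then (if i.val + 1 = k then 2 else 3)
  else if i.val + 1 = j.val ∨ j.val + 1 = i.val then -1 else 0

lemma sum_fin_eq {N : ℕ} (f : Fin N → ℚ) (s : Finset (Fin N)) (h : ∀ i ∉ s, f i = 0) :
    ∑ i, f i = ∑ i ∈ s, f i := (Finset.sum_subset s.subset_univ fun x _ hx => h x hx).symm

lemma fibQ (a b : ℕ) (h : a = b + 2) : (Nat.fib a : ℚ) = Nat.fib (b+1) + Nat.fib b := by
  subst h; rw [Nat.fib_add_two]; push_cast; ring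

lemma triM_det : ∀ k, (triM k).det = (Nat.fib (2*k+1) : ℚ) := by
  intro k
  induction k using Nat.twoStepInduction with
  | zero => simp [Matrix.det_fin_zero]
  | one => simp [Matrix.det_fin_one, triM]; norm_num [Nat.fib]
  | more k ih1 ih2 =>
    rw [show ((triM (k+2)).det) = ∑ j : Fin (k+2), (-1) ^ (j : ℕ) * triM (k+2) 0 j *
        ((triM (k+2)).submatrix Fin.succ j.succAbove).det from Matrix.det_succ_row_zero _]
    rw [sum_fin_eq _ {0, 1} (by
      intro j hj
      simp only [Finset.mem_insert, Finset.mem_singleton] at hj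
      push_neg at hj
      have h1 : j.val ≠ 0 := fun h => hj.1 (Fin.ext (by simpa using h))
      have h2 : j.val ≠ 1 := fun h => hj.2 (Fin.ext (by simpa using h))
      have : triM (k+2) 0 j = 0 := by
        simp only [triM, Fin.val_zero]
        split_ifs <;> simp_all <;> omega
      simp [this])]
    rw [Finset.sum_insert (by simp), Finset.sum_singleton]
    have h00 : ((triM (k+2)).submatrix Fin.succ (Fin.succAbove 0)) = triM (k+1) := by
      funext i j
      simp only [Matrix.submatrix_apply, Fin.succAbove_zero, triM, Fin.val_succ]
      split_ifs <;> simp_all <;> omega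
    have h01 : ((triM (k+2)).submatrix Fin.succ (Fin.succAbove 1)).det
        = -(Nat.fib (2*k+1) : ℚ) := by
      set B := ((triM (k+2)).submatrix Fin.succ (Fin.succAbove 1)) with hB
      rw [show B.det = ∑ i : Fin (k+1), (-1) ^ (i : ℕ) * B i 0 *
          (B.submatrix i.succAbove Fin.succ).det from Matrix.det_succ_column_zero _]
      rw [sum_fin_eq _ {0} (by
        intro i hi
        simp only [Finset.mem_singleton] at hi
        have hiv : i.val ≠ 0 := fun h => hi (Fin.ext (by simpa using h))
        have : B i 0 = 0 := by
          simp only [hB, Matrix.submatrix_apply, triM, Fin.succAbove, Fin.lt_def,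
            Fin.val_succ, Fin.coe_castSucc, Fin.val_zero, Fin.val_one]
          split_ifs <;> simp_all <;> omega
        simp [this])]
      rw [Finset.sum_singleton]
      have h2 : (B.submatrix (Fin.succAbove 0) Fin.succ) = triM k := by
        funext i j
        simp only [hB, Matrix.submatrix_apply, Fin.succAbove_zero, triM, Fin.val_succ,
          Fin.succAbove, Fin.lt_def, Fin.coe_castSucc, Fin.val_one]
        split_ifs <;> simp_all <;> omega
      have e0 : B 0 0 = -1 := by
        simp only [hB, Matrix.submatrix_apply, triM, Fin.succAbove, Fin.lt_def,
          Fin.val_succ, Fin.coe_castSucc, Fin.val_zero, Fin.val_one]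
        norm_num
      rw [h2, e0, ih1]
      simp
    have e1 : triM (k+2) 0 0 = 3 := by simp only [triM]; norm_num
    have e2 : triM (k+2) 0 1 = -1 := by
      simp only [triM, Fin.val_zero, Fin.val_one]
      norm_num
    rw [h00, e1, e2, h01, ih2]
    simp only [Fin.val_zero, Fin.val_one, pow_zero, pow_one]
    have key : Nat.fib (2*k+5) + Nat.fib (2*k+1) = 3 * Nat.fib (2*k+3) := by
      have A := Nat.fib_add_two (n := 2*k+3)
      have B := Nat.fib_add_two (n := 2*k+2)
      have C := Nat.fib_add_two (n := 2*k+1)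
      rw [show 2*k+3+2 = 2*k+5 by omega, show 2*k+3+1 = 2*k+4 by omega] at A
      rw [show 2*k+2+2 = 2*k+4 by omega, show 2*k+2+1 = 2*k+3 by omega] at B
      rw [show 2*k+1+2 = 2*k+3 by omega, show 2*k+1+1 = 2*k+2 by omega] at C
      omega
    have keyq := congrArg (Nat.cast : ℕ → ℚ) key
    push_cast at keyq
    rw [show 2*(k+2)+1 = 2*k+5 by ring, show 2*(k+1)+1 = 2*k+3 by ring]
    linarith

def RM (k : ℕ) : Matrix (Fin k) (Fin k) ℚ := fun i j =>
  if j.val + 1 = k then -1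
  else if i.val = j.val then -1
  else if i.val = j.val + 1 then (if i.val + 1 = k then 2 else 3)
  else if i.val = j.val + 2 then -1 else 0

lemma RM_det : ∀ k, (RM (k+1)).det = (-1)^(k+1) * (Nat.fib (2*k+2) : ℚ) := by
  intro k
  induction k with
  | zero =>
    simp [Matrix.det_fin_one, RM]
  | succ k ih =>
    rw [show ((RM (k+2)).det) = ∑ j : Fin (k+2), (-1) ^ (j : ℕ) * RM (k+2) 0 j *
        ((RM (k+2)).submatrix Fin.succ j.succAbove).det from Matrix.det_succ_row_zero _]
    rw [sum_fin_eq _ {0, Fin.last (k+1)} (by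
      intro j hj
      simp only [Finset.mem_insert, Finset.mem_singleton] at hj
      push_neg at hj
      have h1 : j.val ≠ 0 := fun h => hj.1 (Fin.ext (by simpa using h))
      have h2 : j.val ≠ k+1 := fun h => hj.2 (Fin.ext (by simpa using h))
      have : RM (k+2) 0 j = 0 := by
        simp only [RM, Fin.val_zero]
        split_ifs <;> simp_all <;> omega
      simp [this])]
    rw [Finset.sum_insert (by simp [Fin.ext_iff]), Finset.sum_singleton]
    have h00 : ((RM (k+2)).submatrix Fin.succ (Fin.succAbove 0)) = RM (k+1) := by
      funext i j
      simp only [Matrix.submatrix_apply, Fin.succAbove_zero, RM, Fin.val_succ]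
      split_ifs <;> simp_all <;> omega
    have h0l : ((RM (k+2)).submatrix Fin.succ (Fin.succAbove (Fin.last (k+1)))) = triM (k+1) := by
      funext i j
      simp only [Matrix.submatrix_apply, Fin.succAbove, Fin.lt_def, Fin.val_last,
        Fin.coe_castSucc, Fin.val_succ, RM, triM]
      split_ifs <;> simp_all <;> omega
    have e0 : RM (k+2) 0 0 = -1 := by
      simp only [RM, Fin.val_zero]
      split_ifs <;> simp_all
    have el : RM (k+2) 0 (Fin.last (k+1)) = -1 := by
      simp only [RM, Fin.val_zero, Fin.val_last]
      split_ifs <;> simp_all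
    rw [h00, h0l, e0, el, ih, triM_det]
    simp only [Fin.val_zero, Fin.val_last, pow_zero]
    have key : (Nat.fib (2*(k+1)+2) : ℚ) = Nat.fib (2*k+2) + Nat.fib (2*k+3) := by
      rw [show 2*(k+1)+2 = (2*k+2)+2 by ring, Nat.fib_add_two,
        show 2*k+2+1 = 2*k+3 by omega]
      push_cast; ring
    rw [key, show 2*(k+1)+1 = 2*k+3 by ring]
    ring

def fanM (m : ℕ) : Matrix (Fin m) (Fin m) ℚ := fun i j =>
  if i.val = j.val then (if i.val + 1 = m then (m:ℚ) else if i.val + 2 = m then 2 else 3)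
  else if i.val + 1 = m ∨ j.val + 1 = m ∨ i.val + 1 = j.val ∨ j.val + 1 = i.val then -1 else 0

lemma det_updateRow_sum' {N : ℕ} (M : Matrix (Fin N) (Fin N) ℚ) (r : Fin N)
    (s : Finset (Fin N)) (v : Fin N → Fin N → ℚ) :
    (M.updateRow r (∑ i ∈ s, v i)).det = ∑ i ∈ s, (M.updateRow r (v i)).det := by
  classical
  induction s using Finset.induction with
  | empty =>
    simp only [Finset.sum_empty]
    exact Matrix.det_eq_zero_of_row_eq_zero r (by simp)
  | insert _ _ h ih =>
    rw [Finset.sum_insert h, Matrix.det_updateRow_add, ih, Finset.sum_insert h]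

def wrow (k : ℕ) : Fin (k+1) → ℚ := fun j => if j.val = 0 ∨ j.val = k then 1 else 0

set_option maxHeartbeats 1000000 in
lemma fanM_colsum (k : ℕ) (hk : 2 ≤ k) :
    ∑ i : Fin (k+1), fanM (k+1) i = wrow k := by
  funext j
  erw [Finset.sum_apply]
  by_cases hj0 : j.val = 0
  · rw [sum_fin_eq _ {⟨0, by omega⟩, ⟨1, by omega⟩, ⟨k, by omega⟩} (by
      intro i hi
      simp only [Finset.mem_insert, Finset.mem_singleton, Fin.ext_iff] at hi
      push_neg at hi
      simp only [fanM]
      split_ifs <;> first | (exfalso; omega) | tauto | (push_cast; ring1) | norm_num)]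
    rw [Finset.sum_insert (by simp [Fin.ext_iff]; omega),
      Finset.sum_insert (by simp [Fin.ext_iff]; omega), Finset.sum_singleton]
    have E1 : fanM (k+1) ⟨0, by omega⟩ j = 3 := by
      simp only [fanM]
      split_ifs <;> first | (exfalso; omega) | tauto | (push_cast; ring1) | norm_num
    have E2 : fanM (k+1) ⟨1, by omega⟩ j = -1 := by
      simp only [fanM]
      split_ifs <;> first | (exfalso; omega) | tauto | (push_cast; ring1) | norm_num
    have E3 : fanM (k+1) ⟨k, by omega⟩ j = -1 := by
      simp only [fanM]
      split_ifs <;> first | (exfalso; omega) | tauto | (push_cast; ring1) | norm_num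
    rw [E1, E2, E3]
    simp only [wrow, hj0]
    norm_num
  · by_cases hjk : j.val = k
    · have hval : ∀ i : Fin (k+1), fanM (k+1) i j
          = (-1) + (if i = Fin.last k then (k+2:ℚ) else 0) := by
        intro i
        simp only [fanM, Fin.ext_iff, Fin.val_last]
        split_ifs <;> first | (exfalso; omega) | tauto | (push_cast; ring1) | norm_num
      calc ∑ i : Fin (k+1), fanM (k+1) i j
          = ∑ i : Fin (k+1), ((-1) + (if i = Fin.last k then (k+2:ℚ) else 0)) :=
            Finset.sum_congr rfl fun i _ => hval i
        _ = wrow k j := by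
            rw [Finset.sum_add_distrib, Finset.sum_const, Finset.sum_ite_eq' Finset.univ]
            simp [wrow, hjk, hj0]
            push_cast
            ring
    · by_cases hjk1 : j.val + 1 = k
      · rw [sum_fin_eq _ {⟨j.val - 1, by omega⟩, j, ⟨k, by omega⟩} (by
          intro i hi
          simp only [Finset.mem_insert, Finset.mem_singleton, Fin.ext_iff] at hi
          push_neg at hi
          simp only [fanM]
          split_ifs <;> first | (exfalso; omega) | tauto | (push_cast; ring1) | norm_num)]
        rw [Finset.sum_insert (by simp [Fin.ext_iff]; omega),
          Finset.sum_insert (by simp [Fin.ext_iff]; omega), Finset.sum_singleton]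
        have E1 : fanM (k+1) ⟨j.val - 1, by omega⟩ j = -1 := by
          simp only [fanM]
          split_ifs <;> first | (exfalso; omega) | tauto | (push_cast; ring1) | norm_num
        have E2 : fanM (k+1) j j = 2 := by
          simp only [fanM]
          split_ifs <;> first | (exfalso; omega) | tauto | (push_cast; ring1) | norm_num
        have E3 : fanM (k+1) ⟨k, by omega⟩ j = -1 := by
          simp only [fanM]
          split_ifs <;> first | (exfalso; omega) | tauto | (push_cast; ring1) | norm_num
        rw [E1, E2, E3]
        simp only [wrow]
        split_ifs <;> first | (exfalso; omega) | tauto | (push_cast; ring1) | norm_num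
      · rw [sum_fin_eq _ {⟨j.val - 1, by omega⟩, j, ⟨j.val + 1, by omega⟩, ⟨k, by omega⟩} (by
          intro i hi
          simp only [Finset.mem_insert, Finset.mem_singleton, Fin.ext_iff] at hi
          push_neg at hi
          simp only [fanM]
          split_ifs <;> first | (exfalso; omega) | tauto | (push_cast; ring1) | norm_num)]
        rw [Finset.sum_insert (by simp [Fin.ext_iff]; omega),
          Finset.sum_insert (by simp [Fin.ext_iff]; omega),
          Finset.sum_insert (by simp [Fin.ext_iff]; omega), Finset.sum_singleton]
        have E1 : fanM (k+1) ⟨j.val - 1, by omega⟩ j = -1 := by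
          simp only [fanM]
          split_ifs <;> first | (exfalso; omega) | tauto | (push_cast; ring1) | norm_num
        have E2 : fanM (k+1) j j = 3 := by
          simp only [fanM]
          split_ifs <;> first | (exfalso; omega) | tauto | (push_cast; ring1) | norm_num
        have E3 : fanM (k+1) ⟨j.val + 1, by omega⟩ j = -1 := by
          simp only [fanM]
          split_ifs <;> first | (exfalso; omega) | tauto | (push_cast; ring1) | norm_num
        have E4 : fanM (k+1) ⟨k, by omega⟩ j = -1 := by
          simp only [fanM]
          split_ifs <;> first | (exfalso; omega) | tauto | (push_cast; ring1) | norm_num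
        rw [E1, E2, E3, E4]
        simp only [wrow]
        split_ifs <;> first | (exfalso; omega) | tauto | (push_cast; ring1) | norm_num

set_option maxHeartbeats 1000000 in
lemma fanM_det (k : ℕ) (hk : 2 ≤ k) : (fanM (k+1)).det = (Nat.fib (2*k+2) : ℚ) := by
  have hdet : (fanM (k+1)).det = ((fanM (k+1)).updateRow (Fin.last k) (wrow k)).det := by
    rw [← fanM_colsum k hk]
    erw [det_updateRow_sum']
    rw [Finset.sum_eq_single (Fin.last k)]
    · rw [Matrix.updateRow_eq_self]
    · intro i _ hi
      exact Matrix.det_zero_of_row_eq hi (funext fun x => by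
        rw [Matrix.updateRow_ne hi, Matrix.updateRow_self])
    · intro h
      exact absurd (Finset.mem_univ _) h
  set W := (fanM (k+1)).updateRow (Fin.last k) (wrow k) with hW
  have hrow : ∀ (g : Fin k → Fin (k+1)),
      W.submatrix Fin.castSucc g = (fanM (k+1)).submatrix Fin.castSucc g := by
    intro g
    funext i x
    simp only [Matrix.submatrix_apply, hW]
    rw [Matrix.updateRow_ne (Fin.castSucc_lt_last i).ne]
  rw [hdet, show W.det = ∑ j : Fin (k+1), (-1) ^ ((Fin.last k : Fin (k+1)) + j : ℕ) * W (Fin.last k) j *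
      (W.submatrix (Fin.last k).succAbove j.succAbove).det from Matrix.det_succ_row W (Fin.last k)]
  rw [sum_fin_eq _ {0, Fin.last k} (by
    intro j hj
    simp only [Finset.mem_insert, Finset.mem_singleton] at hj
    push_neg at hj
    have h1 : j.val ≠ 0 := fun h => hj.1 (Fin.ext (by simpa using h))
    have h2 : j.val ≠ k := fun h => hj.2 (Fin.ext (by simpa using h))
    have : W (Fin.last k) j = 0 := by
      rw [hW, Matrix.updateRow_self]
      simp only [wrow]
      split_ifs <;> simp_all
    simp [this])]
  rw [Finset.sum_insert (by simp [Fin.ext_iff]; omega), Finset.sum_singleton]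
  have e0 : W (Fin.last k) 0 = 1 := by
    rw [hW, Matrix.updateRow_self]; simp [wrow]
  have el : W (Fin.last k) (Fin.last k) = 1 := by
    rw [hW, Matrix.updateRow_self]; simp [wrow]
  have m0 : (W.submatrix (Fin.last k).succAbove (Fin.succAbove 0)) = RM k := by
    rw [Fin.succAbove_last, hrow]
    funext i x
    simp only [Matrix.submatrix_apply, Fin.succAbove_zero, fanM, RM,
      Fin.coe_castSucc, Fin.val_succ]
    split_ifs <;> first | (exfalso; omega) | tauto | (push_cast; ring1) | norm_num
  have ml : (W.submatrix (Fin.last k).succAbove (Fin.succAbove (Fin.last k))) = triM k := by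
    rw [Fin.succAbove_last, hrow]
    funext i x
    simp only [Matrix.submatrix_apply, Fin.succAbove_last, fanM, triM,
      Fin.coe_castSucc]
    split_ifs <;> first | (exfalso; omega) | tauto | (push_cast; ring1) | norm_num
  rw [e0, el, m0, ml, triM_det k,
    show k = (k-1)+1 by omega, RM_det (k-1)]
  simp only [Fin.val_zero, Fin.val_last]
  have hs : ((-1:ℚ))^(k-1+1) * (-1:ℚ)^(k-1+1) = 1 := by
    rw [← pow_add]
    exact Even.neg_one_pow ⟨k-1+1, rfl⟩
  have key : (Nat.fib (2*(k-1+1)+2) : ℚ)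
      = Nat.fib (2*(k-1)+2) + Nat.fib (2*(k-1+1)+1) := by
    rw [show 2*(k-1+1)+2 = (2*(k-1)+2)+2 by ring, Nat.fib_add_two,
      show 2*(k-1)+2+1 = 2*(k-1+1)+1 by ring]
    push_cast; ring
  rw [key, show (k-1+1)+(0:ℕ) = k-1+1 by ring,
    show (-1:ℚ)^((k-1+1)+(k-1+1)) = 1 from Even.neg_one_pow ⟨k-1+1, rfl⟩]
  linear_combination (Nat.fib (2*(k-1)+2) : ℚ) * hs


lemma deg_hub (n : ℕ) (hn : 2 ≤ n) (v : Fin n) (hv : (v : ℕ) = n - 1) :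
    (Finset.univ.filter fun l : Fin n => fanAdj n v.val l.val = true).card = n - 1 := by
  have hset : (Finset.univ.filter fun l : Fin n => fanAdj n v.val l.val = true)
      = Finset.univ.erase ⟨n-1, by omega⟩ := by
    ext l
    simp only [Finset.mem_filter, Finset.mem_univ, true_and, Finset.mem_erase, ne_eq,
      fanAdj, decide_eq_true_eq, Fin.ext_iff, and_true]
    omega
  rw [hset, Finset.card_erase_of_mem (Finset.mem_univ _), Finset.card_univ, Fintype.card_fin]

lemma deg_end (n : ℕ) (hn : 3 ≤ n) (v : Fin n) (hv : (v : ℕ) + 1 = n - 1) :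
    (Finset.univ.filter fun l : Fin n => fanAdj n v.val l.val = true).card = 2 := by
  have hset : (Finset.univ.filter fun l : Fin n => fanAdj n v.val l.val = true)
      = {⟨(v:ℕ) - 1, by omega⟩, ⟨n-1, by omega⟩} := by
    ext l
    simp only [Finset.mem_filter, Finset.mem_univ, true_and, Finset.mem_insert,
      Finset.mem_singleton, fanAdj, decide_eq_true_eq, Fin.ext_iff]
    omega
  rw [hset, Finset.card_insert_of_notMem (by
    simp only [Finset.mem_singleton, Fin.ext_iff]; omega), Finset.card_singleton]

lemma deg_mid (n : ℕ) (v : Fin n) (h1 : 1 ≤ (v:ℕ)) (h2 : (v:ℕ) + 1 < n - 1) :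
    (Finset.univ.filter fun l : Fin n => fanAdj n v.val l.val = true).card = 3 := by
  have hset : (Finset.univ.filter fun l : Fin n => fanAdj n v.val l.val = true)
      = {⟨(v:ℕ) - 1, by omega⟩, ⟨(v:ℕ) + 1, by omega⟩, ⟨n-1, by omega⟩} := by
    ext l
    simp only [Finset.mem_filter, Finset.mem_univ, true_and, Finset.mem_insert,
      Finset.mem_singleton, fanAdj, decide_eq_true_eq, Fin.ext_iff]
    omega
  rw [hset, Finset.card_insert_of_notMem (by
      simp only [Finset.mem_insert, Finset.mem_singleton, Fin.ext_iff]
      push_neg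
      omega),
    Finset.card_insert_of_notMem (by
      simp only [Finset.mem_singleton, Fin.ext_iff]; omega),
    Finset.card_singleton]



lemma fanM_eq (n : ℕ) (hn : 2 ≤ n) :
    delFirst (lapl n (fanAdj n)) = fanM (n-1) := by
  funext i j
  have hi := i.isLt
  have hj := j.isLt
  simp only [delFirst, Matrix.submatrix_apply, lapl, fanM]
  by_cases hd : i.val = j.val
  · have hfin : (⟨i.val+1, by omega⟩ : Fin n) = ⟨j.val+1, by omega⟩ := by
      simp only [Fin.mk.injEq]; omega
    rw [if_pos hfin, if_pos hd]
    by_cases hhub : i.val + 1 = n - 1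
    · rw [if_pos hhub,
        deg_hub n hn ⟨i.val+1, by omega⟩ (show i.val + 1 = n - 1 from hhub)]
    · by_cases hend : i.val + 2 = n - 1
      · rw [if_neg hhub, if_pos hend,
          deg_end n (by omega) ⟨i.val+1, by omega⟩ (show i.val+1+1 = n-1 by omega)]
        norm_num
      · rw [if_neg hhub, if_neg hend,
          deg_mid n ⟨i.val+1, by omega⟩ (show 1 ≤ i.val+1 by omega) (show i.val+1+1 < n-1 by omega)]
        norm_num
  · have hfin : (⟨i.val+1, by omega⟩ : Fin n) ≠ ⟨j.val+1, by omega⟩ := by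
      simp only [ne_eq, Fin.mk.injEq]; omega
    rw [if_neg hfin, if_neg hd]
    simp only [fanAdj, decide_eq_true_eq]
    split_ifs <;> first | rfl | (exfalso; omega)

lemma fib_rec3 (c : ℕ) : Nat.fib (c+4) + Nat.fib c = 3 * Nat.fib (c+2) := by
  have A := Nat.fib_add_two (n := c+2)
  have B := Nat.fib_add_two (n := c+1)
  have C := Nat.fib_add_two (n := c)
  rw [show c+2+2 = c+4 by omega, show c+2+1 = c+3 by omega] at A
  rw [show c+1+2 = c+3 by omega, show c+1+1 = c+2 by omega] at B
  omega

/-- For the fan graph on `n` vertices, `d_n = det(L(1|1))` equals the Fibonacci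
number `F_{2n-2}`; equivalently, `d_n = 3d_{n-1} - d_{n-2}` for `n ≥ 4`. -/
theorem stmt13 :
    (∀ n : ℕ, 2 ≤ n →
      (delFirst (lapl n (fanAdj n))).det = (Nat.fib (2 * n - 2) : ℚ)) ∧
    (∀ n : ℕ, 4 ≤ n →
      (delFirst (lapl n (fanAdj n))).det =
        3 * (delFirst (lapl (n - 1) (fanAdj (n - 1)))).det -
          (delFirst (lapl (n - 2) (fanAdj (n - 2)))).det) := by
  have main : ∀ n : ℕ, 2 ≤ n →
      (delFirst (lapl n (fanAdj n))).det = (Nat.fib (2 * n - 2) : ℚ) := by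
    intro n hn
    rw [fanM_eq n hn]
    by_cases h2 : n = 2
    · subst h2
      show (fanM 1).det = ((Nat.fib 2 : ℕ) : ℚ)
      rw [Matrix.det_fin_one]
      norm_num [fanM, Nat.fib]
    · by_cases h3 : n = 3
      · subst h3
        show (fanM 2).det = ((Nat.fib 4 : ℕ) : ℚ)
        rw [Matrix.det_fin_two, show Nat.fib 4 = 3 from rfl]
        norm_num [fanM]
      · rw [show n-1 = (n-2)+1 by omega, fanM_det (n-2) (by omega),
          show 2*(n-2)+2 = 2*n-2 by omega]
  refine ⟨main, ?_⟩
  intro n hn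
  rw [main n (by omega), main (n-1) (by omega), main (n-2) (by omega)]
  rw [show 2*n-2 = (2*n-6)+4 by omega, show 2*(n-1)-2 = (2*n-6)+2 by omega,
    show 2*(n-2)-2 = 2*n-6 by omega]
  have h := congrArg (Nat.cast : ℕ → ℚ) (fib_rec3 (2*n-6))
  push_cast at h
  linarith
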